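/- The bilinear form Q̄(x,y) = p(x·c(y)) on Cl(V,Q) satisfies: (1) Q̄(1,1)=1; (2) left-translation adjoint L(x)* = L(c(x)); (3) right-translation adjoint R(x)* = R(c(x)); (4) Q̄ restricts to Q on V; (5) Q̄(α(x),α(y)) = Q̄(x,y); and (6) Q̄(c(x),c(y)) = Q̄(x,y) for all x, y. -/

import Mathlib

open CliffordAlgebra
open scoped symmDiff

section Defs

variable {F V : Type*} [Field F] [AddCommGroup V] [Module F V]

/-- The monomial `e_I` associated to a multi-index `I`, realized as a finite set of
indices multiplied in increasing order (with `e_∅ = 1`). -/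
noncomputable def eI (Qf : QuadraticForm F V) {n : ℕ} (b : Module.Basis (Fin n) F V)
    (s : Finset (Fin n)) : CliffordAlgebra Qf :=
  ((s.sort (· ≤ ·)).map fun i => ι Qf (b i)).prod

/-- The conjugation anti-automorphism `c = α ∘ τ` of the Clifford algebra. -/
noncomputable def cconj (Qf : QuadraticForm F V) :
    CliffordAlgebra Qf →ₗ[F] CliffordAlgebra Qf :=
  involute.toLinearMap ∘ₗ (reverse (Q := Qf))

/-- The canonical bilinear form `Q̄(x,y) = p(x · c(y))`, where `p` is the scalar-component
projection determined by a monomial basis `bas` (indexed by multi-indices, with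
`bas s = e_s`, in particular `bas ∅ = 1`). -/
noncomputable def Qbar {Qf : QuadraticForm F V} {n : ℕ}
    (bas : Module.Basis (Finset (Fin n)) F (CliffordAlgebra Qf))
    (x y : CliffordAlgebra Qf) : F :=
  bas.coord ∅ (x * cconj Qf y)

/-- The Lie algebra `G = {ξ : c(ξ) = -ξ}` of infinitesimal isometries, as a submodule. -/
noncomputable def Gsub (Qf : QuadraticForm F V) : Submodule F (CliffordAlgebra Qf) :=
  LinearMap.ker (cconj Qf + LinearMap.id)

end Defs

section Aux
variable {F V : Type*} [Field F] [AddCommGroup V] [Module F V]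
  (Qf : QuadraticForm F V) {n : ℕ} (b : Module.Basis (Fin n) F V)

lemma eI_empty : eI Qf b ∅ = 1 := by simp [eI]

lemma eI_singleton (i : Fin n) : eI Qf b {i} = ι Qf (b i) := by
  simp [eI, Finset.sort_singleton]

lemma eI_insert_of_lt {j : Fin n} {s : Finset (Fin n)} (h : ∀ k ∈ s, j < k) :
    ι Qf (b j) * eI Qf b s = eI Qf b (insert j s) := by
  have hj : j ∉ s := fun hj => lt_irrefl j (h j hj)
  rw [eI, eI, Finset.sort_insert _ (fun k hk => (h k hk).le) hj, List.map_cons, List.prod_cons]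

variable (B : LinearMap.BilinForm F V)
  (hsymm : ∀ v w : V, B v w = B w v)
  (hQ : ∀ v : V, Qf v = -(B v v))
  (hortho : ∀ i j : Fin n, i ≠ j → B (b i) (b j) = 0)

include hQ hortho in
lemma iota_anticomm {i j : Fin n} (hij : i ≠ j) :
    ι Qf (b i) * ι Qf (b j) = -(ι Qf (b j) * ι Qf (b i)) := by
  refine ι_mul_ι_comm_of_isOrtho ?_
  have : Qf (b i + b j) = Qf (b i) + Qf (b j) := by
    rw [hQ, hQ, hQ]
    simp only [map_add, LinearMap.add_apply]
    rw [hortho i j hij, hortho j i hij.symm]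
    ring
  exact this

include hQ hortho in
lemma iota_mul_eI (s : Finset (Fin n)) :
    ∀ i : Fin n, ∃ c : F, ι Qf (b i) * eI Qf b s = c • eI Qf b (s ∆ {i}) := by
  induction s using Finset.strongInduction with
  | _ s ih =>
    intro i
    rcases s.eq_empty_or_nonempty with rfl | hne
    · refine ⟨1, ?_⟩
      have : (∅ : Finset (Fin n)) ∆ {i} = {i} := by simp
      rw [this, eI_empty, eI_singleton, mul_one, one_smul]
    · obtain ⟨j, hjs, hmin⟩ : ∃ j ∈ s, ∀ k ∈ s, j ≤ k :=
        ⟨s.min' hne, s.min'_mem hne, fun k hk => s.min'_le k hk⟩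
      have hs' : s.erase j ⊂ s := Finset.erase_ssubset hjs
      have hlt : ∀ k ∈ s.erase j, j < k := fun k hk =>
        lt_of_le_of_ne (hmin k (Finset.mem_of_mem_erase hk))
          (Ne.symm (Finset.ne_of_mem_erase hk))
      have hpeel : eI Qf b s = ι Qf (b j) * eI Qf b (s.erase j) := by
        rw [eI_insert_of_lt Qf b hlt, Finset.insert_erase hjs]
      rcases lt_trichotomy i j with hij | heq | hij
      · -- i < j, so i < everything in s
        have hall : ∀ k ∈ s, i < k := fun k hk => lt_of_lt_of_le hij (hmin k hk)
        have hnotmem : i ∉ s := fun h => lt_irrefl i (hall i h)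
        have : s ∆ {i} = insert i s := by
          ext k
          simp only [Finset.mem_symmDiff, Finset.mem_singleton, Finset.mem_insert]
          constructor
          · rintro (⟨h1, _⟩ | ⟨rfl, _⟩) <;> tauto
          · rintro (rfl | h1)
            · exact Or.inr ⟨rfl, hnotmem⟩
            · exact Or.inl ⟨h1, fun he => hnotmem (he ▸ h1)⟩
        exact ⟨1, by rw [this, eI_insert_of_lt Qf b hall, one_smul]⟩
      · -- i = j
        subst heq
        refine ⟨Qf (b i), ?_⟩
        have : s ∆ {i} = s.erase i := by
          ext k
          simp only [Finset.mem_symmDiff, Finset.mem_singleton, Finset.mem_erase]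
          constructor
          · rintro (⟨h1, h2⟩ | ⟨rfl, h2⟩) <;> tauto
          · rintro ⟨h1, h2⟩; exact Or.inl ⟨h2, h1⟩
        rw [this, hpeel, ← mul_assoc, ι_sq_scalar, Algebra.smul_def]
      · -- j < i
        obtain ⟨c, hc⟩ := ih _ hs' i
        have hji : j ≠ i := ne_of_lt hij
        have hlt2 : ∀ k ∈ (s.erase j) ∆ {i}, j < k := by
          intro k hk
          rw [Finset.mem_symmDiff] at hk
          rcases hk with ⟨hk, _⟩ | ⟨hk, _⟩
          · exact hlt k hk
          · rw [Finset.mem_singleton] at hk; exact hk ▸ hij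
        have hins : insert j ((s.erase j) ∆ {i}) = s ∆ {i} := by
          ext k
          simp only [Finset.mem_insert, Finset.mem_symmDiff, Finset.mem_singleton,
            Finset.mem_erase]
          constructor
          · rintro (rfl | ⟨⟨h1, h2⟩, h3⟩ | ⟨rfl, h4⟩)
            · exact Or.inl ⟨hjs, hji⟩
            · exact Or.inl ⟨h2, h3⟩
            · exact Or.inr ⟨rfl, fun h => h4 ⟨(by rintro rfl; exact hji rfl), h⟩⟩
          · rintro (⟨h1, h2⟩ | ⟨rfl, h2⟩)
            · by_cases hkj : k = j
              · exact Or.inl hkj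
              · exact Or.inr (Or.inl ⟨⟨hkj, h1⟩, h2⟩)
            · refine Or.inr (Or.inr ⟨rfl, fun h => h2 h.2⟩)
        refine ⟨-c, ?_⟩
        rw [hpeel, ← mul_assoc, iota_anticomm Qf b B hQ hortho hji.symm, neg_mul, mul_assoc,
          hc, mul_smul_comm, eI_insert_of_lt Qf b hlt2, hins, neg_smul]

include hQ hortho in
lemma eI_mul_eI (s : Finset (Fin n)) :
    ∀ t : Finset (Fin n), ∃ c : F, eI Qf b s * eI Qf b t = c • eI Qf b (s ∆ t) := by
  induction s using Finset.strongInduction with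
  | _ s ih =>
    intro t
    rcases s.eq_empty_or_nonempty with rfl | hne
    · refine ⟨1, ?_⟩
      have h0 : (∅ : Finset (Fin n)) ∆ t = t := by
        ext k; simp [Finset.mem_symmDiff]
      rw [h0, eI_empty, one_mul, one_smul]
    · obtain ⟨j, hjs, hmin⟩ : ∃ j ∈ s, ∀ k ∈ s, j ≤ k :=
        ⟨s.min' hne, s.min'_mem hne, fun k hk => s.min'_le k hk⟩
      have hs' : s.erase j ⊂ s := Finset.erase_ssubset hjs
      have hlt : ∀ k ∈ s.erase j, j < k := fun k hk =>
        lt_of_le_of_ne (hmin k (Finset.mem_of_mem_erase hk))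
          (Ne.symm (Finset.ne_of_mem_erase hk))
      have hpeel : eI Qf b s = ι Qf (b j) * eI Qf b (s.erase j) := by
        rw [eI_insert_of_lt Qf b hlt, Finset.insert_erase hjs]
      obtain ⟨c, hc⟩ := ih _ hs' t
      obtain ⟨c', hc'⟩ := iota_mul_eI Qf b B hQ hortho ((s.erase j) ∆ t) j
      refine ⟨c * c', ?_⟩
      have hassoc : (s.erase j ∆ t) ∆ {j} = s ∆ t := by
        have h1 : s = (s.erase j) ∆ {j} := by
          ext k
          simp only [Finset.mem_symmDiff, Finset.mem_erase, Finset.mem_singleton]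
          constructor
          · intro hk
            by_cases hkj : k = j
            · exact Or.inr ⟨hkj, fun h => h.1 hkj⟩
            · exact Or.inl ⟨⟨hkj, hk⟩, hkj⟩
          · rintro (⟨⟨_, h⟩, _⟩ | ⟨rfl, _⟩)
            · exact h
            · exact hjs
        conv_rhs => rw [h1]
        rw [symmDiff_right_comm]
      rw [hpeel, mul_assoc, hc, mul_smul_comm, hc', ← hassoc, smul_smul]
end Aux

section Aux2
variable {F V : Type*} [Field F] [AddCommGroup V] [Module F V]
  (Qf : QuadraticForm F V) {n : ℕ} (b : Module.Basis (Fin n) F V)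

lemma cconj_mul (x y : CliffordAlgebra Qf) :
    cconj Qf (x * y) = cconj Qf y * cconj Qf x := by
  simp [cconj]

lemma cconj_cconj (x : CliffordAlgebra Qf) : cconj Qf (cconj Qf x) = x := by
  simp only [cconj, LinearMap.comp_apply, AlgHom.toLinearMap_apply]
  rw [reverse_involute, involute_involute, reverse_reverse]

lemma cconj_one : cconj Qf (1 : CliffordAlgebra Qf) = 1 := by simp [cconj]

lemma cconj_ι (v : V) : cconj Qf (ι Qf v) = -(ι Qf v) := by simp [cconj]

lemma cconj_involute (x : CliffordAlgebra Qf) :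
    cconj Qf (involute x) = involute (cconj Qf x) := by
  simp only [cconj, LinearMap.comp_apply, AlgHom.toLinearMap_apply]
  rw [reverse_involute]

lemma involute_listProd (l : List (Fin n)) :
    involute ((l.map fun i => ι Qf (b i)).prod) =
      ((-1 : F) ^ l.length) • (l.map fun i => ι Qf (b i)).prod := by
  induction l with
  | nil => simp
  | cons i l ih =>
    simp only [List.map_cons, List.prod_cons, map_mul, involute_ι, List.length_cons, ih]
    rw [pow_succ, mul_comm ((-1 : F) ^ l.length), mul_smul, neg_one_smul, neg_mul,
      mul_smul_comm]

lemma reverse_listProd (l : List (Fin n)) :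
    reverse ((l.map fun i => ι Qf (b i)).prod) =
      ((l.reverse.map fun i => ι Qf (b i)).prod) := by
  induction l with
  | nil => simp
  | cons i l ih =>
    simp only [List.map_cons, List.prod_cons, reverse.map_mul, ih, reverse_ι,
      List.reverse_cons, List.map_append, List.prod_append, List.map_cons, List.prod_cons,
      List.map_nil, List.prod_nil, mul_one]

variable (bas : Module.Basis (Finset (Fin n)) F (CliffordAlgebra Qf))
  (hbas : ∀ s : Finset (Fin n), bas s = eI Qf b s)

include hbas in
lemma coord_eI (s : Finset (Fin n)) :
    bas.coord ∅ (eI Qf b s) = if s = ∅ then 1 else 0 := by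
  rw [← hbas s, Module.Basis.coord_apply, Module.Basis.repr_self, Finsupp.single_apply]

include hbas in
lemma coord_one : bas.coord ∅ (1 : CliffordAlgebra Qf) = 1 := by
  rw [← eI_empty Qf b, coord_eI Qf b bas hbas, if_pos rfl]

omit hbas in
lemma involute_eI (s : Finset (Fin n)) :
    involute (eI Qf b s) = ((-1 : F) ^ s.card) • eI Qf b s := by
  rw [eI, involute_listProd, Finset.length_sort]

set_option linter.unusedSectionVars false in
include hbas in
lemma coord_involute (x : CliffordAlgebra Qf) :
    bas.coord ∅ (involute x) = bas.coord ∅ x := by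
  have h : (bas.coord ∅) ∘ₗ (involute.toLinearMap :
      CliffordAlgebra Qf →ₗ[F] CliffordAlgebra Qf) = bas.coord ∅ := by
    apply Module.Basis.ext bas
    intro s
    simp only [LinearMap.comp_apply, AlgHom.toLinearMap_apply]
    rcases eq_or_ne s ∅ with rfl | hs
    · rw [hbas, eI_empty]; simp
    · rw [hbas, involute_eI Qf b, map_smul, smul_eq_mul,
        coord_eI Qf b bas hbas, if_neg hs, mul_zero]
  exact LinearMap.congr_fun h x
end Aux2


section Aux3
set_option linter.unusedSectionVars false
variable {F V : Type*} [Field F] [AddCommGroup V] [Module F V]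
  (Qf : QuadraticForm F V) {n : ℕ} (b : Module.Basis (Fin n) F V)
  (B : LinearMap.BilinForm F V)
  (hQ : ∀ v : V, Qf v = -(B v v))
  (hortho : ∀ i j : Fin n, i ≠ j → B (b i) (b j) = 0)
  (bas : Module.Basis (Finset (Fin n)) F (CliffordAlgebra Qf))
  (hbas : ∀ s : Finset (Fin n), bas s = eI Qf b s)

include hQ hortho in
lemma listProd_eq_smul_eI (l : List (Fin n)) (hl : l.Nodup) :
    ∃ c : F, (l.map fun i => ι Qf (b i)).prod = c • eI Qf b l.toFinset := by
  induction l with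
  | nil => exact ⟨1, by simp [eI_empty]⟩
  | cons i l ih =>
    rw [List.nodup_cons] at hl
    obtain ⟨c, hc⟩ := ih hl.2
    obtain ⟨c', hc'⟩ := iota_mul_eI Qf b B hQ hortho l.toFinset i
    have ht : l.toFinset ∆ {i} = (i :: l).toFinset := by
      ext k
      simp only [Finset.mem_symmDiff, List.mem_toFinset, Finset.mem_singleton,
        List.toFinset_cons, Finset.mem_insert]
      constructor
      · rintro (⟨h1, _⟩ | ⟨rfl, _⟩) <;> tauto
      · rintro (rfl | h1)
        · exact Or.inr ⟨rfl, fun h => hl.1 h⟩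
        · exact Or.inl ⟨h1, fun he => hl.1 (he ▸ h1)⟩
    refine ⟨c * c', ?_⟩
    simp only [List.map_cons, List.prod_cons]
    rw [hc, mul_smul_comm, hc', ht, smul_smul]

include hQ hortho hbas in
lemma coord_cconj (x : CliffordAlgebra Qf) :
    bas.coord ∅ (cconj Qf x) = bas.coord ∅ x := by
  have h : (bas.coord ∅) ∘ₗ cconj Qf = bas.coord ∅ := by
    apply Module.Basis.ext bas
    intro s
    simp only [LinearMap.comp_apply]
    rcases eq_or_ne s ∅ with rfl | hs
    · rw [hbas, eI_empty, cconj_one]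
    · rw [hbas]
      have h1 : cconj Qf (eI Qf b s) =
          involute (((s.sort (· ≤ ·)).reverse.map fun i => ι Qf (b i)).prod) := by
        simp only [cconj, LinearMap.comp_apply, AlgHom.toLinearMap_apply]
        rw [eI, reverse_listProd]
      have hnd : (s.sort (· ≤ ·)).reverse.Nodup :=
        List.nodup_reverse.mpr (s.sort_nodup _)
      obtain ⟨c, hc⟩ := listProd_eq_smul_eI Qf b B hQ hortho _ hnd
      have htf : (s.sort (· ≤ ·)).reverse.toFinset = s := by
        rw [List.toFinset_reverse, Finset.sort_toFinset]
      rw [h1, coord_involute Qf b bas hbas, hc, htf, map_smul, smul_eq_mul,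
        coord_eI Qf b bas hbas, if_neg hs, mul_zero]
  exact LinearMap.congr_fun h x

include hQ hortho hbas in
lemma coord_mul_comm (x y : CliffordAlgebra Qf) :
    bas.coord ∅ (x * y) = bas.coord ∅ (y * x) := by
  have key : ((LinearMap.mul F (CliffordAlgebra Qf)).compr₂ (bas.coord ∅)) =
      ((LinearMap.mul F (CliffordAlgebra Qf)).flip.compr₂ (bas.coord ∅)) := by
    apply LinearMap.ext_basis bas bas
    intro s t
    simp only [LinearMap.compr₂_apply, LinearMap.mul_apply', LinearMap.flip_apply]
    rcases eq_or_ne s t with rfl | hst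
    · rfl
    · obtain ⟨c, hc⟩ := eI_mul_eI Qf b B hQ hortho s t
      obtain ⟨c', hc'⟩ := eI_mul_eI Qf b B hQ hortho t s
      have h1 : s ∆ t ≠ ∅ := fun h => hst (symmDiff_eq_bot.mp h)
      have h2 : t ∆ s ≠ ∅ := fun h => hst (symmDiff_eq_bot.mp h).symm
      rw [hbas, hbas, hc, hc', map_smul, map_smul, smul_eq_mul, smul_eq_mul,
        coord_eI Qf b bas hbas, coord_eI Qf b bas hbas, if_neg h1, if_neg h2,
        mul_zero, mul_zero]
  have := LinearMap.congr_fun (LinearMap.congr_fun key x) y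
  simpa using this

include hQ hortho hbas in
lemma coord_iota_mul_iota (v w : V) :
    bas.coord ∅ (ι Qf v * ι Qf w) = -(B v w) := by
  have key : (((LinearMap.mul F (CliffordAlgebra Qf)).compr₂
      (bas.coord ∅)).compl₁₂ (ι Qf) (ι Qf)) = -B := by
    apply LinearMap.ext_basis b b
    intro i j
    simp only [LinearMap.compl₁₂_apply, LinearMap.compr₂_apply, LinearMap.mul_apply',
      LinearMap.neg_apply]
    have hlt : ∀ i j : Fin n, i < j →
        bas.coord ∅ (ι Qf (b i) * ι Qf (b j)) = 0 := by
      intro i j hij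
      have h1 : ι Qf (b i) * ι Qf (b j) = eI Qf b (insert i {j}) := by
        rw [← eI_singleton Qf b j, eI_insert_of_lt Qf b]
        intro k hk
        rw [Finset.mem_singleton] at hk
        exact hk ▸ hij
      rw [h1, coord_eI Qf b bas hbas, if_neg (Finset.insert_ne_empty _ _)]
    rcases lt_trichotomy i j with hij | rfl | hij
    · rw [hlt i j hij, hortho i j (ne_of_lt hij), neg_zero]
    · rw [ι_sq_scalar, Algebra.algebraMap_eq_smul_one, map_smul, smul_eq_mul,
        coord_one Qf b bas hbas, mul_one, hQ]
    · rw [iota_anticomm Qf b B hQ hortho (ne_of_gt hij), map_neg, hlt j i hij,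
        neg_zero, hortho i j (ne_of_gt hij), neg_zero]
  have := LinearMap.congr_fun (LinearMap.congr_fun key v) w
  simpa using this

end Aux3

theorem stmt9 {F V : Type*} [Field F] [AddCommGroup V] [Module F V]
    [FiniteDimensional F V] (h2 : (2 : F) ≠ 0)
    (B : LinearMap.BilinForm F V)
    (hsymm : ∀ v w : V, B v w = B w v)
    (hnd : ∀ v : V, (∀ w : V, B v w = 0) → v = 0)
    (Qf : QuadraticForm F V) (hQ : ∀ v : V, Qf v = -(B v v))
    {n : ℕ} (b : Module.Basis (Fin n) F V)
    (hortho : ∀ i j : Fin n, i ≠ j → B (b i) (b j) = 0)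
    (bas : Module.Basis (Finset (Fin n)) F (CliffordAlgebra Qf))
    (hbas : ∀ s : Finset (Fin n), bas s = eI Qf b s) :
    Qbar bas 1 1 = 1 ∧
    (∀ x y z : CliffordAlgebra Qf, Qbar bas (x * y) z = Qbar bas y (cconj Qf x * z)) ∧
    (∀ x y z : CliffordAlgebra Qf, Qbar bas (y * x) z = Qbar bas y (z * cconj Qf x)) ∧
    (∀ v w : V, Qbar bas (ι Qf v) (ι Qf w) = B v w) ∧
    (∀ x y : CliffordAlgebra Qf, Qbar bas (involute x) (involute y) = Qbar bas x y) ∧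
    (∀ x y : CliffordAlgebra Qf, Qbar bas (cconj Qf x) (cconj Qf y) = Qbar bas x y) := by
  have tr := coord_mul_comm Qf b B hQ hortho bas hbas
  refine ⟨?_, ?_, ?_, ?_, ?_, ?_⟩
  · rw [Qbar, cconj_one, one_mul, coord_one Qf b bas hbas]
  · intro x y z
    rw [Qbar, Qbar, cconj_mul, cconj_cconj, mul_assoc, tr, mul_assoc]
  · intro x y z
    rw [Qbar, Qbar, cconj_mul, cconj_cconj, mul_assoc]
  · intro v w
    rw [Qbar, cconj_ι, mul_neg, map_neg, coord_iota_mul_iota Qf b B hQ hortho bas hbas,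
      neg_neg]
  · intro x y
    rw [Qbar, Qbar, cconj_involute, ← map_mul, coord_involute Qf b bas hbas]
  · intro x y
    rw [Qbar, Qbar, cconj_cconj, ← coord_cconj Qf b B hQ hortho bas hbas (cconj Qf x * y),
      cconj_mul, cconj_cconj, tr]
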